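/- Let X, Y, W be real Banach spaces and let L be a nonempty symmetric closed subset of S_X × S_{Y*} having property (P). Let (x,y*), (z,t*) ∈ L and let w*, v* be elements of the unit sphere of W*. If y*(T(x))·w*(e) = t*(T(z))·v*(e) for every finite-rank bounded linear operator T : X → Y and every e in the unit sphere of W, then (z,t*) = (x,y*) or (z,t*) = (−x,−y*). -/

import Mathlib

open Filter Topology Set

noncomputable section

variable {X Y : Type*}
  [NormedAddCommGroup X] [NormedSpace ℝ X]
  [NormedAddCommGroup Y] [NormedSpace ℝ Y]

/-- The Hausdorff distance between the symmetric pairs `Γ p = {p, -p}` and `Γ q = {q, -q}`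
in `X × Y*` with the sum norm. -/
def dHG (p q : X × (Y →L[ℝ] ℝ)) : ℝ :=
  min (‖p.1 - q.1‖ + ‖p.2 - q.2‖) (‖p.1 + q.1‖ + ‖p.2 + q.2‖)

/-- Property (P) for a subset `L ⊆ S_X × S_{Y*}`. -/
def PropP (L : Set (X × (Y →L[ℝ] ℝ))) : Prop :=
  ∃ ε₀ > (0 : ℝ), ∀ ε : ℝ, 0 < ε → ε < ε₀ → ∃ ϖ > (0 : ℝ), ∀ p ∈ L,
    ∃ (xs : X →L[ℝ] ℝ) (ye : Y), ‖xs‖ ≤ 1 ∧ ‖ye‖ ≤ 1 ∧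
      ∀ q ∈ L, ε ≤ dHG p q → |xs q.1| + |q.2 ye| ≤ xs p.1 + p.2 ye - ϖ

/-- A finite-rank continuous linear operator. -/
def FinRank {W : Type*} [NormedAddCommGroup W] [NormedSpace ℝ W] (T : X →L[ℝ] W) : Prop :=
  FiniteDimensional ℝ ↥(LinearMap.range T.toLinearMap)

theorem statement11 {W : Type*} [NormedAddCommGroup W] [NormedSpace ℝ W]
    [CompleteSpace X] [CompleteSpace Y] [CompleteSpace W]
    (L : Set (X × (Y →L[ℝ] ℝ))) (hLne : L.Nonempty)
    (hLsphere : ∀ p ∈ L, ‖p.1‖ = 1 ∧ ‖p.2‖ = 1)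
    (hLsym : ∀ p ∈ L, -p ∈ L) (hLclosed : IsClosed L)
    (hP : PropP L)
    (p q : X × (Y →L[ℝ] ℝ)) (hp : p ∈ L) (hq : q ∈ L)
    (ws vs : W →L[ℝ] ℝ) (hws : ‖ws‖ = 1) (hvs : ‖vs‖ = 1)
    (h : ∀ T : X →L[ℝ] Y, FinRank T → ∀ e : W, ‖e‖ = 1 →
      p.2 (T p.1) * ws e = q.2 (T q.1) * vs e) :
    q = p ∨ q = -p := by
  by_contra hc
  push_neg at hc
  obtain ⟨hqp, hqnp⟩ := hc
  obtain ⟨hnp1, hnp2⟩ := hLsphere p hp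
  obtain ⟨hnq1, hnq2⟩ := hLsphere q hq
  -- dHG p q > 0
  have hd : 0 < dHG p q := by
    have h1 : 0 < ‖p.1 - q.1‖ + ‖p.2 - q.2‖ := by
      by_contra hcon
      push_neg at hcon
      have n1 := norm_nonneg (p.1 - q.1)
      have n2 := norm_nonneg (p.2 - q.2)
      have e1 : p.1 - q.1 = 0 := by
        have : ‖p.1 - q.1‖ = 0 := by linarith
        simpa [norm_eq_zero] using this
      have e2 : p.2 - q.2 = 0 := by
        have : ‖p.2 - q.2‖ = 0 := by linarith
        simpa [norm_eq_zero] using this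
      exact hqp (Prod.ext (by rw [sub_eq_zero] at e1; exact e1.symm)
        (by rw [sub_eq_zero] at e2; exact e2.symm))
    have h2 : 0 < ‖p.1 + q.1‖ + ‖p.2 + q.2‖ := by
      by_contra hcon
      push_neg at hcon
      have n1 := norm_nonneg (p.1 + q.1)
      have n2 := norm_nonneg (p.2 + q.2)
      have e1 : p.1 + q.1 = 0 := by
        have : ‖p.1 + q.1‖ = 0 := by linarith
        simpa [norm_eq_zero] using this
      have e2 : p.2 + q.2 = 0 := by
        have : ‖p.2 + q.2‖ = 0 := by linarith
        simpa [norm_eq_zero] using this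
      refine hqnp (Prod.ext ?_ ?_)
      · show q.1 = (-p).1
        simp only [Prod.fst_neg]
        rw [eq_neg_iff_add_eq_zero, add_comm]
        exact e1
      · show q.2 = (-p).2
        simp only [Prod.snd_neg]
        rw [eq_neg_iff_add_eq_zero, add_comm]
        exact e2
    simp only [dHG]
    exact lt_min h1 h2
  -- Step 1: |p.2 (T p.1)| = |q.2 (T q.1)| for finite-rank T
  have hT : ∀ T : X →L[ℝ] Y, FinRank T → |p.2 (T p.1)| = |q.2 (T q.1)| := by
    intro T hTfr
    have hfun : (p.2 (T p.1)) • ws = (q.2 (T q.1)) • vs := by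
      ext w
      by_cases hw : w = 0
      · simp [hw]
      · have hwn : ‖w‖ ≠ 0 := norm_ne_zero_iff.mpr hw
        have hnorm : ‖(‖w‖⁻¹ : ℝ) • w‖ = 1 := by
          rw [norm_smul, norm_inv, norm_norm]
          field_simp
        have heq := h T hTfr _ hnorm
        rw [map_smul, map_smul] at heq
        simp only [smul_eq_mul] at heq
        have h2 : ‖w‖⁻¹ * (p.2 (T p.1) * ws w) = ‖w‖⁻¹ * (q.2 (T q.1) * vs w) := by
          ring_nf
          ring_nf at heq
          linarith
        have := mul_left_cancel₀ (inv_ne_zero hwn) h2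
        simpa [smul_eq_mul] using this
    have hn := congrArg norm hfun
    rw [norm_smul (p.2 (T p.1)) ws, norm_smul (q.2 (T q.1)) vs, hws, hvs] at hn
    simpa using hn
  -- rank-one operators are finite-rank
  have hfr : ∀ (f : X →L[ℝ] ℝ) (y : Y), FinRank (f.smulRight y) := by
    intro f y
    unfold FinRank
    have hle : LinearMap.range (f.smulRight y).toLinearMap ≤ Submodule.span ℝ {y} := by
      rintro _ ⟨x, rfl⟩
      exact Submodule.smul_mem _ _ (Submodule.mem_span_singleton_self y)
    exact Submodule.finiteDimensional_of_le hle
  -- key equality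
  have key : ∀ (f : X →L[ℝ] ℝ) (y : Y), |f p.1 * p.2 y| = |f q.1 * q.2 y| := by
    intro f y
    have := hT (f.smulRight y) (hfr f y)
    simpa [ContinuousLinearMap.smulRight_apply, map_smul, smul_eq_mul] using this
  -- norming functional for p.1
  have hp1 : p.1 ≠ 0 := by
    intro h0
    rw [h0, norm_zero] at hnp1
    norm_num at hnp1
  obtain ⟨g, hg1, hgp⟩ := exists_dual_vector ℝ p.1 (norm_ne_zero_iff.mpr hp1)
  have hgp1 : |g p.1| = 1 := by
    rw [hgp]
    simp [hnp1]
  -- |p.2 y| = |g q.1| * |q.2 y|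
  have hlam_all : ∀ y : Y, |p.2 y| = |g q.1| * |q.2 y| := by
    intro y
    have := key g y
    rw [abs_mul, abs_mul, hgp1, one_mul] at this
    exact this
  have hlam_le : |g q.1| ≤ 1 := by
    calc |g q.1| = ‖g q.1‖ := (Real.norm_eq_abs _).symm
    _ ≤ ‖g‖ * ‖q.1‖ := g.le_opNorm _
    _ = 1 := by rw [hg1, hnq1, one_mul]
  have hlam_ge : (1 : ℝ) ≤ |g q.1| := by
    have hb : ‖p.2‖ ≤ |g q.1| := by
      apply ContinuousLinearMap.opNorm_le_bound _ (abs_nonneg _)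
      intro y
      rw [Real.norm_eq_abs, hlam_all y]
      calc |g q.1| * |q.2 y| ≤ |g q.1| * (‖q.2‖ * ‖y‖) := by
            apply mul_le_mul_of_nonneg_left _ (abs_nonneg _)
            rw [← Real.norm_eq_abs]
            exact q.2.le_opNorm y
      _ = |g q.1| * ‖y‖ := by rw [hnq2, one_mul]
    rw [hnp2] at hb
    exact hb
  have hlam : |g q.1| = 1 := le_antisymm hlam_le hlam_ge
  have h2eq : ∀ y : Y, |p.2 y| = |q.2 y| := by
    intro y
    rw [hlam_all y, hlam, one_mul]
  -- pick y₀ with q.2 y₀ ≠ 0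
  have hq2ne : ∃ y₀ : Y, q.2 y₀ ≠ 0 := by
    by_contra hcon
    push_neg at hcon
    have : q.2 = 0 := ContinuousLinearMap.ext fun y => by simp [hcon y]
    rw [this, norm_zero] at hnq2
    norm_num at hnq2
  obtain ⟨y₀, hy₀⟩ := hq2ne
  have h1eq : ∀ f : X →L[ℝ] ℝ, |f p.1| = |f q.1| := by
    intro f
    have := key f y₀
    rw [abs_mul, abs_mul, h2eq y₀] at this
    exact mul_right_cancel₀ (abs_ne_zero.mpr hy₀) this
  -- apply property (P)
  obtain ⟨ε₀, hε₀, hPP⟩ := hP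
  have hε : 0 < min (ε₀ / 2) (dHG p q) := lt_min (by linarith) hd
  have hεlt : min (ε₀ / 2) (dHG p q) < ε₀ := lt_of_le_of_lt (min_le_left _ _) (by linarith)
  obtain ⟨ϖ, hϖ, hmain⟩ := hPP _ hε hεlt
  obtain ⟨xs, ye, hxs, hye, hineq⟩ := hmain p hp
  have hq' := hineq q hq (min_le_right _ _)
  have e1 : |xs q.1| = |xs p.1| := (h1eq xs).symm
  have e2 : |q.2 ye| = |p.2 ye| := (h2eq ye).symm
  have l1 : xs p.1 ≤ |xs p.1| := le_abs_self _
  have l2 : p.2 ye ≤ |p.2 ye| := le_abs_self _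
  rw [e1, e2] at hq'
  linarith


end
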